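/- arXiv:2209.11075 — 2 statements merged into one kernel-verified Lean document; each statement's English description precedes it below -/
import Mathlib

section
/- For i ∈ {1, 2}, let r_i and s_i be integers with s_i ≠ 0 and α_i := r_i/s_i ∉ ℤ_{≤0}. Set d := lcm(s_1, s_2) and let b be an integer with b > max(|r_1|, |r_2|, d·|⌊1−α_1⌋ − ⌊1−α_2⌋|). Set c_i := gcd(r_i, s_i, b) and assume there exists an integer e_i with 1 ≤ e_i ≤ d and b·e_i ≡ c_i (mod s_i) (so that b/c_i is coprime to the denominator of α_i and D_{b/c_i}(α_i) is defined). Let k_i ∈ {0, …, c_i − 1} and let a be a positive integer. Set γ_i := (D_{b/c_i}(α_i) + k_i)/c_i + ⌊1−α_i⌋/b and Γ_i := (⟨e_i·α_i⟩ + k_i)/c_i − ⌊1−a·α_i⌋. Then γ_1 ≤ γ_2 if and only if Γ_1 ⪯ Γ_2; moreover, if Γ_1 = Γ_2 then α_1 = α_2. -/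
open Polynomial
open scoped Classical

noncomputable section

/-- The generalized Dwork map `D_b(α)`: the unique rational whose reduced denominator is
coprime to `b` and such that `b·D_b(α) − α ∈ {0, 1, …, b−1}`. -/
def dwork (b : ℕ) (α : ℚ) : ℚ :=
  if h : ∃ θ : ℚ, Nat.Coprime θ.den b ∧ ∃ k : ℤ, 0 ≤ k ∧ k < (b : ℤ) ∧ (b : ℚ) * θ - α = (k : ℚ)
  then h.choose else 0

/-- `α ∈ ℤ_{≤0}`. -/
def IsNonPosInt (α : ℚ) : Prop := ∃ m : ℤ, m ≤ 0 ∧ α = (m : ℚ)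

/-- `α ∈ ℤ_{>0}`. -/
def IsPosInt (α : ℚ) : Prop := ∃ m : ℤ, 0 < m ∧ α = (m : ℚ)

/-- `𝔫_α`. -/
def frakn (α : ℚ) : ℤ := if 0 ≤ α then α.num else |α.num| + 1

/-- `⟨x⟩`: the fractional part of `x` if `x ∉ ℤ`, and `1` if `x ∈ ℤ`. -/
def cangle (x : ℝ) : ℝ := if ∃ m : ℤ, x = (m : ℝ) then 1 else Int.fract x

/-- Christol order `x ⪯ y`. -/
def cle (x y : ℝ) : Prop := cangle x < cangle y ∨ (cangle x = cangle y ∧ y ≤ x)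

/-- The step function `δ_b(r, s, ·)`. -/
def qdelta (b : ℕ) (r s : ℤ) (x : ℝ) : ℤ :=
  if Int.gcd (s / (Nat.gcd (Int.gcd r s) b : ℤ)) (((b / Nat.gcd (Int.gcd r s) b : ℕ)) : ℤ) = 1 then
    ⌊(Nat.gcd (Int.gcd r s) b : ℝ) * x
        - ((dwork (b / Nat.gcd (Int.gcd r s) b) ((r : ℚ) / (s : ℚ)) : ℚ) : ℝ)
        - ((⌊1 - (r : ℚ) / (s : ℚ)⌋ : ℤ) : ℝ) / ((b / Nat.gcd (Int.gcd r s) b : ℕ) : ℝ)⌋ + 1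
  else 0

/-- The Landau-type step function `Δ_b^{𝐫,𝐭}`. -/
def qDeltaFn {v w : ℕ} (b : ℕ) (rr : Fin v → ℤ × ℤ) (tt : Fin w → ℤ × ℤ) (x : ℝ) : ℤ :=
  (∑ i, qdelta b (rr i).1 (rr i).2 x) - (∑ j, qdelta b (tt j).1 (tt j).2 x)

/-- The q-Pochhammer symbol `(q^r; q^s)_n` for `n ∈ ℕ`, inside `ℚ(q)`. -/
def qPoch (r s : ℤ) (n : ℕ) : RatFunc ℚ :=
  ∏ i ∈ Finset.range n, (1 - RatFunc.X ^ (r + s * (i : ℤ)))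

/-- The q-Pochhammer symbol `(q^r; q^s)_n` for `n ∈ ℤ`. -/
def qPochZ (r s : ℤ) (n : ℤ) : RatFunc ℚ :=
  if 0 ≤ n then qPoch r s n.toNat else (qPoch (r - s) (-s) (-n).toNat)⁻¹

/-- Multiplicity of `p` in `g`: the largest `k` with `p^k ∣ g`. -/
def polyMult (p g : Polynomial ℚ) : ℕ := sSup {k : ℕ | p ^ k ∣ g}

/-- The valuation `v_{φ_b}` on `ℚ(q)` attached to the `b`-th cyclotomic polynomial. -/
def cycVal (b : ℕ) (f : RatFunc ℚ) : ℤ :=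
  (polyMult (cyclotomic b ℚ) f.num : ℤ) - (polyMult (cyclotomic b ℚ) f.denom : ℤ)

/-- The image of an integer polynomial in `ℚ(q)`. -/
def polyZ (g : Polynomial ℤ) : RatFunc ℚ :=
  algebraMap (Polynomial ℚ) (RatFunc ℚ) (g.map (Int.castRingHom ℚ))

/-- `f ∈ ℤ[q⁻¹, q]`. -/
def IsIntLaurent (f : RatFunc ℚ) : Prop :=
  ∃ (m : ℕ) (g : Polynomial ℤ), f * RatFunc.X ^ m = polyZ g

/-- `f ∈ ℤ[q]`. -/
def IsIntPoly (f : RatFunc ℚ) : Prop := ∃ g : Polynomial ℤ, f = polyZ g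

/-- The ratio attached to a pair of integers. -/
def ratOf (p : ℤ × ℤ) : ℚ := (p.1 : ℚ) / (p.2 : ℚ)

/-- The q-hypergeometric term `Q_{𝐫,𝐭}(q; n)`, `n ∈ ℕ`. -/
def qHyp {v w : ℕ} (rr : Fin v → ℤ × ℤ) (tt : Fin w → ℤ × ℤ) (n : ℕ) : RatFunc ℚ :=
  (∏ i, qPoch (rr i).1 (rr i).2 n) / (∏ j, qPoch (tt j).1 (tt j).2 n)

/-- The q-hypergeometric term `Q_{𝐫,𝐭}(q; n)`, `n ∈ ℤ`. -/
def qHypZ {v w : ℕ} (rr : Fin v → ℤ × ℤ) (tt : Fin w → ℤ × ℤ) (n : ℤ) : RatFunc ℚ :=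
  (∏ i, qPochZ (rr i).1 (rr i).2 n) / (∏ j, qPochZ (tt j).1 (tt j).2 n)

/-- `c := gcd(r, s, b)`. -/
def cOf (p : ℤ × ℤ) (b : ℕ) : ℕ := Nat.gcd (Int.gcd p.1 p.2) b

/-- Membership in `V_b` (resp. `W_b`): `gcd(s, b) = gcd(r, s, b)`. -/
def inV (p : ℤ × ℤ) (b : ℕ) : Prop := Nat.gcd p.2.natAbs b = cOf p b

/-- `d_{𝐫,𝐭}`: the lcm of all the `s_i` and `u_j`. -/
def dRT {v w : ℕ} (rr : Fin v → ℤ × ℤ) (tt : Fin w → ℤ × ℤ) : ℕ :=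
  Nat.lcm (Finset.univ.lcm fun i => ((rr i).2).natAbs)
    (Finset.univ.lcm fun j => ((tt j).2).natAbs)

/-- `b̃`: the greatest divisor of `b` coprime to `d`. -/
def btilde (d b : ℕ) : ℕ := Nat.findGreatest (fun k => k ∣ b ∧ Nat.Coprime k d) b

/-- The unique `a ∈ {1,…,d}` with `a·b̃ ≡ 1 (mod d)`. -/
def aOf (d b : ℕ) : ℕ :=
  if h : ∃ a, 1 ≤ a ∧ a ≤ d ∧ (a * btilde d b) % d = 1 % d then h.choose else 1

/-- The representative of `b` modulo `d` lying in `{1,…,d}`. -/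
def repMod (d b : ℕ) : ℕ := if b % d = 0 then d else b % d

/-- The jump abscissa `(⟨e·α⟩ + k)/c − ⌊1 − a·α⌋`. -/
def jumpPt (p : ℤ × ℤ) (b : ℕ) (a ei : ℤ) (k : ℕ) : ℝ :=
  (cangle (((ei : ℚ) * ratOf p : ℚ) : ℝ) + (k : ℝ)) / (cOf p b : ℝ)
    - ((⌊1 - (a : ℚ) * ratOf p⌋ : ℤ) : ℝ)

/-- Number of pairs `(i,k)` with jump abscissa `⪯ x` coming from one pair `p`. -/
def XiCount (p : ℤ × ℤ) (b : ℕ) (a ei : ℤ) (x : ℝ) : ℕ :=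
  if inV p b then ((Finset.range (cOf p b)).filter fun k => cle (jumpPt p b a ei k) x).card else 0

/-- The generalized Christol step function `Ξ_{𝐫,𝐭}(b, ·)`, relative to choices `e`, `f`. -/
def Xi {v w : ℕ} (rr : Fin v → ℤ × ℤ) (tt : Fin w → ℤ × ℤ) (b : ℕ)
    (e : Fin v → ℤ) (f : Fin w → ℤ) (x : ℝ) : ℤ :=
  (∑ i, (XiCount (rr i) b ((aOf (dRT rr tt) b : ℕ) : ℤ) (e i) x : ℤ))
    - (∑ j, (XiCount (tt j) b ((aOf (dRT rr tt) b : ℕ) : ℤ) (f j) x : ℤ))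

/-- `ei` is an admissible choice for the pair `p` and `b`: positive with `b·ei ≡ c (mod s)`. -/
def goodChoice (p : ℤ × ℤ) (b : ℕ) (ei : ℤ) : Prop :=
  inV p b → 0 < ei ∧ p.2 ∣ ((b : ℤ) * ei - (cOf p b : ℤ))

end

section Helpers

private lemma den_dvd_of_eq_div (q : ℚ) (a b : ℤ) (h : q = (a : ℚ) / (b : ℚ)) :
    ((q.den : ℤ)) ∣ b := by
  rw [h, ← Rat.divInt_eq_div]; exact Rat.den_dvd a b

private lemma dwork_eq_of {b : ℕ} (hb : 0 < b) {α θ : ℚ}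
    (hcop : Nat.Coprime θ.den b) {k : ℤ} (hk0 : 0 ≤ k) (hkb : k < (b : ℤ))
    (hθ : (b : ℚ) * θ - α = (k : ℚ)) : dwork b α = θ := by
  have hex : ∃ θ' : ℚ, Nat.Coprime θ'.den b ∧
      ∃ k' : ℤ, 0 ≤ k' ∧ k' < (b : ℤ) ∧ (b : ℚ) * θ' - α = (k' : ℚ) :=
    ⟨θ, hcop, k, hk0, hkb, hθ⟩
  rw [dwork, dif_pos hex]
  obtain ⟨hcop', k', hk0', hkb', hθ'⟩ := hex.choose_spec
  set θ' := hex.choose with hθ'def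
  have hbq : (b : ℚ) ≠ 0 := Nat.cast_ne_zero.mpr hb.ne'
  have hd : θ' - θ = ((k' - k : ℤ) : ℚ) / ((b : ℤ) : ℚ) := by
    push_cast
    field_simp
    linarith
  have hden' : (θ' - θ).den ∣ b := by
    have := den_dvd_of_eq_div (θ' - θ) (k' - k) (b : ℤ) hd
    exact_mod_cast this
  have hdd : θ' - θ = ((θ'.num * θ.den - θ.num * θ'.den : ℤ) : ℚ)
      / (((θ'.den : ℤ) * (θ.den : ℤ) : ℤ) : ℚ) := by
    have e1 : θ' = (θ'.num : ℚ) / (θ'.den : ℚ) := (Rat.num_div_den θ').symm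
    have e2 : θ = (θ.num : ℚ) / (θ.den : ℚ) := (Rat.num_div_den θ).symm
    have d1 : ((θ'.den : ℚ)) ≠ 0 := by exact_mod_cast θ'.den_nz
    have d2 : ((θ.den : ℚ)) ≠ 0 := by exact_mod_cast θ.den_nz
    rw [eq_div_iff (by push_cast; exact mul_ne_zero d1 d2)]
    nth_rewrite 1 [e1, e2]
    push_cast
    field_simp
  have hdenmul : (θ' - θ).den ∣ θ'.den * θ.den := by
    have := den_dvd_of_eq_div (θ' - θ) _ _ hdd
    exact_mod_cast this
  have hcopd : Nat.Coprime (θ' - θ).den b :=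
    Nat.Coprime.coprime_dvd_left hdenmul (Nat.Coprime.mul hcop' hcop)
  have hden1 : (θ' - θ).den = 1 := by
    have h1 : (θ' - θ).den ∣ Nat.gcd (θ' - θ).den b := Nat.dvd_gcd dvd_rfl hden'
    rwa [hcopd, Nat.dvd_one] at h1
  have hz : θ' - θ = (((θ' - θ).num : ℤ) : ℚ) := by
    conv_lhs => rw [← Rat.num_div_den (θ' - θ)]
    rw [hden1]
    simp
  set z := (θ' - θ).num with hzdef
  have hzb : z * (b : ℤ) = k' - k := by
    have : (z : ℚ) * ((b : ℤ) : ℚ) = ((k' - k : ℤ) : ℚ) := by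
      rw [← hz, hd]
      field_simp
    exact_mod_cast this
  have hz0 : z = 0 := by nlinarith [hzb]
  have : θ' - θ = 0 := by rw [hz, hz0]; simp
  linarith [this]

private lemma cangle_sub_intCast (x : ℝ) (m : ℤ) : cangle (x - (m : ℝ)) = cangle x := by
  unfold cangle
  have h : (∃ z : ℤ, x - (m : ℝ) = (z : ℝ)) ↔ (∃ z : ℤ, x = (z : ℝ)) := by
    constructor
    · rintro ⟨z, hz⟩; exact ⟨z + m, by push_cast; linarith⟩
    · rintro ⟨z, hz⟩; exact ⟨z - m, by push_cast; linarith⟩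
  rw [if_congr h rfl rfl, Int.fract_sub_intCast]

private lemma cangle_ratCast (q : ℚ) :
    cangle ((q : ℝ)) = (((q + ((⌊1 - q⌋ : ℤ) : ℚ)) : ℚ) : ℝ) := by
  by_cases hq : ∃ m : ℤ, q = (m : ℚ)
  · obtain ⟨m, rfl⟩ := hq
    have h1 : ⌊1 - (m : ℚ)⌋ = 1 - m := by
      rw [show (1 : ℚ) - (m : ℚ) = ((1 - m : ℤ) : ℚ) by push_cast; ring, Int.floor_intCast]
    rw [cangle, if_pos ⟨m, by push_cast; ring⟩, h1]
    push_cast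
    ring
  · have hq' : ¬ ∃ m : ℤ, (q : ℝ) = (m : ℝ) := by
      rintro ⟨m, hm⟩; exact hq ⟨m, by exact_mod_cast hm⟩
    rw [cangle, if_neg hq']
    have h2 : ((⌊q⌋ : ℚ)) ≠ q := fun h => hq ⟨⌊q⌋, h.symm⟩
    have h3 : ((⌊q⌋ : ℚ)) < q := lt_of_le_of_ne (Int.floor_le q) h2
    have hfl : ⌊1 - q⌋ = -⌊q⌋ := by
      rw [Int.floor_eq_iff]
      constructor
      · push_cast
        linarith [Int.lt_floor_add_one q]
      · push_cast
        linarith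
    rw [Int.fract, Rat.floor_cast, hfl]
    push_cast
    ring

private lemma cangle_ratCast_Ioc (q : ℚ) (h0 : 0 < q) (h1 : q ≤ 1) :
    cangle ((q : ℝ)) = (q : ℝ) := by
  rw [cangle_ratCast]
  rcases eq_or_lt_of_le h1 with h | h
  · rw [h]; norm_num
  · have : ⌊1 - q⌋ = 0 := Int.floor_eq_zero_iff.mpr ⟨by linarith, by linarith⟩
    rw [this]
    push_cast
    ring

end Helpers

section Side

set_option maxHeartbeats 1600000 in
private lemma side_main (r s : ℤ) (b d : ℕ) (e : ℤ) (hs : s ≠ 0)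
    (hα : ¬ IsNonPosInt ((r : ℚ) / (s : ℚ)))
    (hrb : |r| < (b : ℤ))
    (hsd : s ∣ (d : ℤ))
    (hes : s ∣ ((b : ℤ) * e - (cOf (r, s) b : ℤ))) :
    dwork (b / cOf (r, s) b) ((r : ℚ) / (s : ℚ))
        = (e : ℚ) * ((r : ℚ) / (s : ℚ)) + ((⌊1 - (e : ℚ) * ((r : ℚ) / (s : ℚ))⌋ : ℤ) : ℚ) ∧
      (0 < (e : ℚ) * ((r : ℚ) / (s : ℚ)) + ((⌊1 - (e : ℚ) * ((r : ℚ) / (s : ℚ))⌋ : ℤ) : ℚ) ∧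
        (e : ℚ) * ((r : ℚ) / (s : ℚ)) + ((⌊1 - (e : ℚ) * ((r : ℚ) / (s : ℚ))⌋ : ℤ) : ℚ) ≤ 1) ∧
      (∃ k0 : ℤ, ((b / cOf (r, s) b : ℕ) : ℚ)
          * ((e : ℚ) * ((r : ℚ) / (s : ℚ)) + ((⌊1 - (e : ℚ) * ((r : ℚ) / (s : ℚ))⌋ : ℤ) : ℚ))
          - (r : ℚ) / (s : ℚ) = (k0 : ℚ)) ∧
      (∃ dF : ℤ, (d : ℚ) * ((e : ℚ) * ((r : ℚ) / (s : ℚ))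
            + ((⌊1 - (e : ℚ) * ((r : ℚ) / (s : ℚ))⌋ : ℤ) : ℚ)) = (dF : ℚ)
          ∧ (cOf (r, s) b : ℤ) ∣ dF) ∧
      ((cOf (r, s) b : ℤ)) ∣ (d : ℤ) := by
  have hb : 0 < b := by
    have h0 : (0 : ℤ) < (b : ℤ) := lt_of_le_of_lt (abs_nonneg r) hrb
    exact_mod_cast h0
  set α : ℚ := (r : ℚ) / (s : ℚ) with hαdef
  set c : ℕ := cOf (r, s) b with hcdef
  clear_value c
  set n : ℤ := α.num with hndef
  set t : ℕ := α.den with htdef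
  have ht0 : 0 < t := α.pos
  have htq : ((t : ℚ)) ≠ 0 := by exact_mod_cast ht0.ne'
  have hsq : ((s : ℚ)) ≠ 0 := Int.cast_ne_zero.mpr hs
  have hαeq : α = (n : ℚ) / (t : ℚ) := (Rat.num_div_den α).symm
  have hred : IsCoprime (t : ℤ) n := by
    rw [Int.isCoprime_iff_gcd_eq_one, Int.gcd_comm]
    exact_mod_cast α.reduced
  clear_value n t
  have hcross : r * (t : ℤ) = n * s := by
    have h1 : (r : ℚ) * (t : ℚ) = (n : ℚ) * (s : ℚ) := by
      have : α * (s : ℚ) = (r : ℚ) := by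
        rw [hαdef]; field_simp
      rw [hαeq] at this
      field_simp at this
      linarith
    exact_mod_cast h1
  have hcop_nt : IsCoprime (t : ℤ) n := hred
  have htds : (t : ℤ) ∣ s := by
    apply hcop_nt.dvd_of_dvd_mul_left
    exact ⟨r, by linarith⟩
  obtain ⟨h, hsh⟩ := htds
  have hh0 : h ≠ 0 := by
    intro hh; rw [hh, mul_zero] at hsh; exact hs hsh
  have hr_nh : r = n * h := by
    have : r * (t : ℤ) = (n * h) * (t : ℤ) := by rw [hcross, hsh]; ring
    exact mul_right_cancel₀ (by exact_mod_cast ht0.ne') this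
  have hgcd_nt : Int.gcd n (t : ℤ) = 1 := by
    rw [Int.gcd_comm]; exact Int.isCoprime_iff_gcd_eq_one.mp hcop_nt
  have hgcd_rs : Int.gcd r s = h.natAbs := by
    rw [hr_nh, hsh, Int.gcd_mul_right, hgcd_nt, one_mul]
  have hc_eq : c = Nat.gcd h.natAbs b := by
    rw [hcdef]; show Nat.gcd (Int.gcd r s) b = _; rw [hgcd_rs]
  have hch : (c : ℤ) ∣ h := by
    rw [hc_eq]
    exact dvd_trans (Int.natCast_dvd_natCast.mpr (Nat.gcd_dvd_left _ _))
      (Int.natAbs_dvd.mpr dvd_rfl)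
  have hcb : c ∣ b := by rw [hc_eq]; exact Nat.gcd_dvd_right _ _
  have hc0 : 0 < c := by
    rcases Nat.eq_zero_or_pos c with h0 | h0
    · exfalso; rw [hc_eq] at h0; have := Nat.eq_zero_of_gcd_eq_zero_right h0; omega
    · exact h0
  set b' : ℕ := b / c with hb'def
  have hbb' : b = c * b' := by rw [hb'def]; exact (Nat.mul_div_cancel' hcb).symm
  clear_value b'
  have hb'0 : 0 < b' := by
    rcases Nat.eq_zero_or_pos b' with h0 | h0
    · exfalso; rw [h0, mul_zero] at hbb'; omega
    · exact h0
  have hcs : (c : ℤ) ∣ s := hsh ▸ Dvd.dvd.mul_left hch (t : ℤ)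
  have hcr : (c : ℤ) ∣ r := hr_nh ▸ Dvd.dvd.mul_left hch n
  have hcd : (c : ℤ) ∣ (d : ℤ) := dvd_trans hcs hsd
  -- gcd(|s|, b) divides c
  have hg2 : (Nat.gcd s.natAbs b : ℤ) ∣ (c : ℤ) := by
    have h1 : (Nat.gcd s.natAbs b : ℤ) ∣ s :=
      dvd_trans (Int.natCast_dvd_natCast.mpr (Nat.gcd_dvd_left _ _)) (Int.natAbs_dvd.mpr dvd_rfl)
    have h2 : (Nat.gcd s.natAbs b : ℤ) ∣ (b : ℤ) * e :=
      Dvd.dvd.mul_right (Int.natCast_dvd_natCast.mpr (Nat.gcd_dvd_right _ _)) e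
    have h3 : (Nat.gcd s.natAbs b : ℤ) ∣ ((b : ℤ) * e - (c : ℤ)) := dvd_trans h1 hes
    have h4 := dvd_sub h2 h3
    simpa using h4
  -- coprimality of t and b'
  have hcop_tb' : Nat.Coprime t b' := by
    set u : ℕ := Nat.gcd t b' with hu
    have hut : u ∣ t := Nat.gcd_dvd_left _ _
    have hub' : u ∣ b' := Nat.gcd_dvd_right _ _
    have h1 : u * c ∣ s.natAbs := by
      have : s.natAbs = t * h.natAbs := by
        rw [hsh, Int.natAbs_mul, Int.natAbs_natCast]
      rw [this]
      exact mul_dvd_mul hut (by rw [hc_eq]; exact Nat.gcd_dvd_left _ _)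
    have h2 : u * c ∣ b := by
      rw [hbb', mul_comm c b']
      exact mul_dvd_mul hub' dvd_rfl
    have h3 : u * c ∣ Nat.gcd s.natAbs b := Nat.dvd_gcd h1 h2
    have h4 : u * c ∣ c := by
      have : Nat.gcd s.natAbs b ∣ c := by exact_mod_cast hg2
      exact dvd_trans h3 this
    have h5 : u * c ≤ c := Nat.le_of_dvd hc0 h4
    have h6 : u ≠ 0 := Nat.gcd_ne_zero_left ht0.ne'
    unfold Nat.Coprime
    nlinarith [Nat.one_le_iff_ne_zero.mpr h6]
  -- numerator bound
  have hnb' : |n| ≤ (b' : ℤ) - 1 := by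
    have h1 : (c : ℤ) ≤ |h| := by
      have : c ≤ h.natAbs := Nat.le_of_dvd (Int.natAbs_pos.mpr hh0) (by
        rw [hc_eq]; exact Nat.gcd_dvd_left _ _)
      rw [Int.abs_eq_natAbs]; exact_mod_cast this
    have h2 : (c : ℤ) * |n| ≤ |r| := by
      rw [hr_nh, abs_mul]
      nlinarith [abs_nonneg n]
    have h3 : (c : ℤ) * |n| < (c : ℤ) * (b' : ℤ) := by
      have : ((b : ℕ) : ℤ) = (c : ℤ) * (b' : ℤ) := by exact_mod_cast hbb'
      linarith
    have h4 : |n| < (b' : ℤ) := lt_of_mul_lt_mul_left h3 (by positivity)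
    omega
  -- w from the congruence
  obtain ⟨w, hw⟩ := hes
  have key1 : (c : ℤ) * ((b' : ℤ) * e - 1) = s * w := by
    have hbz : ((b : ℕ) : ℤ) = (c : ℤ) * (b' : ℤ) := by exact_mod_cast hbb'
    rw [← hw, hbz]; ring
  have ht_b'e : (t : ℤ) ∣ (b' : ℤ) * e - 1 := by
    obtain ⟨h', hh'⟩ := hch
    have htc : (t : ℤ) * (c : ℤ) ∣ s := ⟨h', by rw [hsh, hh']; ring⟩
    have : (t : ℤ) * (c : ℤ) ∣ (c : ℤ) * ((b' : ℤ) * e - 1) := key1 ▸ dvd_trans htc ⟨w, rfl⟩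
    obtain ⟨v, hv⟩ := this
    exact ⟨v, by
      apply mul_left_cancel₀ (show (c : ℤ) ≠ 0 by positivity)
      rw [hv]; ring⟩
  -- t = 1 implies n ≥ 1
  have hn_t1 : t = 1 → 1 ≤ n := by
    intro ht1
    by_contra hn
    push_neg at hn
    apply hα
    refine ⟨n, by omega, ?_⟩
    rw [hαeq, ht1]
    simp
  -- the Dwork value
  set Eq1 : ℤ := ⌊1 - (e : ℚ) * α⌋ with hEq1
  clear_value Eq1
  set Fq : ℚ := (e : ℚ) * α + (Eq1 : ℚ) with hFqdef
  clear_value Fq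
  have hFq_pos : 0 < Fq := by
    have := Int.sub_one_lt_floor (1 - (e : ℚ) * α)
    rw [hFqdef, hEq1]
    push_cast
    linarith
  have hFq_le : Fq ≤ 1 := by
    have := Int.floor_le (1 - (e : ℚ) * α)
    rw [hFqdef, hEq1]
    linarith
  have htα : (t : ℚ) * α = (n : ℚ) := by rw [hαeq]; field_simp
  set P : ℤ := e * n + (t : ℤ) * Eq1 with hPdef
  clear_value P
  have htFq : (t : ℚ) * Fq = (P : ℚ) := by
    rw [hFqdef, hPdef]
    push_cast
    rw [mul_add, show (t:ℚ) * ((e:ℚ) * α) = (e:ℚ) * ((t:ℚ) * α) by ring, htα]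
  have hP1 : 1 ≤ P := by
    have h0 : (0 : ℚ) < (P : ℚ) := by
      rw [← htFq]; exact mul_pos (by exact_mod_cast ht0) hFq_pos
    have h1 : (0 : ℤ) < P := by exact_mod_cast h0
    omega
  have hPt : P ≤ (t : ℤ) := by
    have : ((P : ℚ)) ≤ (t : ℚ) := by
      rw [← htFq]
      nlinarith [hFq_le, show (0:ℚ) < (t:ℚ) by exact_mod_cast ht0]
    exact_mod_cast this
  have hPt1 : t ≠ 1 → P ≤ (t : ℤ) - 1 := by
    intro ht1
    rcases eq_or_lt_of_le hPt with hPt' | hPt'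
    · exfalso
      -- P = t means Fq = 1, so e*α ∈ ℤ, so t ∣ e, so t ∣ 1
      have hFq1 : Fq = 1 := by
        have : (t : ℚ) * Fq = (t : ℚ) * 1 := by rw [htFq, hPt']; push_cast; ring
        exact mul_left_cancel₀ htq this
      have hten : (t : ℤ) ∣ e * n := by
        have : e * n = (t : ℤ) * (1 - Eq1) := by
          have h1 : (e : ℚ) * α = 1 - (Eq1 : ℚ) := by
            rw [hFqdef] at hFq1; linarith
          have h2 : (e : ℚ) * (n : ℚ) = (t : ℚ) * (1 - (Eq1 : ℚ)) := by
            rw [← htα]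
            rw [show (e:ℚ) * ((t:ℚ) * α) = (t:ℚ) * ((e:ℚ) * α) by ring, h1]
          exact_mod_cast h2
        exact ⟨1 - Eq1, this⟩
      have hte : (t : ℤ) ∣ e := hcop_nt.dvd_of_dvd_mul_right hten
      have hd1 : (t : ℤ) ∣ 1 := by
        have h1 : (t : ℤ) ∣ (b' : ℤ) * e := Dvd.dvd.mul_left hte _
        have h2 := dvd_sub h1 ht_b'e
        simpa using h2
      have : t = 1 := by
        have := Int.le_of_dvd one_pos hd1
        omega
      exact ht1 this
    · omega
  -- k0
  have hcq : ((c : ℚ)) ≠ 0 := by positivity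
  have hcrdiv : ((r / (c : ℤ) : ℤ) : ℚ) * (c : ℚ) = (r : ℚ) := by
    exact_mod_cast congrArg (Int.cast : ℤ → ℚ) (Int.ediv_mul_cancel hcr)
  set k0 : ℤ := (r / (c : ℤ)) * w + (b' : ℤ) * Eq1 with hk0def
  clear_value k0
  have hk0eq : ((b' : ℕ) : ℚ) * Fq - α = (k0 : ℚ) := by
    have hsα : (s : ℚ) * α = (r : ℚ) := by rw [hαdef]; field_simp
    have h1 : (c : ℚ) * (((b' : ℚ) * e - 1) * α) = (c : ℚ) * (((r / (c : ℤ) : ℤ) : ℚ) * w) := by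
      have hkey : ((c : ℕ) : ℚ) * ((b' : ℚ) * (e : ℚ) - 1) = (s : ℚ) * (w : ℚ) := by
        exact_mod_cast congrArg (Int.cast : ℤ → ℚ) key1
      calc (c : ℚ) * (((b' : ℚ) * e - 1) * α) = ((c : ℚ) * ((b' : ℚ) * (e:ℚ) - 1)) * α := by ring
        _ = (s : ℚ) * (w : ℚ) * α := by rw [hkey]
        _ = (w : ℚ) * ((s : ℚ) * α) := by ring
        _ = (w : ℚ) * (r : ℚ) := by rw [hsα]
        _ = (c : ℚ) * (((r / (c : ℤ) : ℤ) : ℚ) * w) := by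
            rw [show (c : ℚ) * (((r / (c : ℤ) : ℤ) : ℚ) * w) = (((r / (c : ℤ) : ℤ) : ℚ) * (c:ℚ)) * w by ring, hcrdiv]
            ring
    have h2 : ((b' : ℚ) * (e:ℚ) - 1) * α = ((r / (c : ℤ) : ℤ) : ℚ) * w :=
      mul_left_cancel₀ hcq h1
    rw [hFqdef, hk0def]
    push_cast
    linear_combination h2
  have htk0 : (t : ℤ) * k0 = (b' : ℤ) * P - n := by
    have : ((t : ℤ) * k0 : ℚ) = (((b' : ℤ) * P - n : ℤ) : ℚ) := by
      push_cast
      have : (t : ℚ) * (((b' : ℕ) : ℚ) * Fq - α) = (t : ℚ) * (k0 : ℚ) := by rw [hk0eq]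
      calc (t : ℚ) * (k0 : ℚ) = (t : ℚ) * (((b' : ℕ) : ℚ) * Fq - α) := this.symm
        _ = (b' : ℚ) * ((t : ℚ) * Fq) - (t : ℚ) * α := by push_cast; ring
        _ = (b' : ℚ) * (P : ℚ) - (n : ℚ) := by rw [htFq, htα]
    exact_mod_cast this
  have hk0_lb : 0 ≤ k0 := by
    have h1 : 1 ≤ (t : ℤ) * k0 := by
      rw [htk0]
      nlinarith [hP1, hnb', le_abs_self n,
        show (1:ℤ) ≤ (b':ℤ) by exact_mod_cast hb'0]
    nlinarith [show (1:ℤ) ≤ (t:ℤ) by exact_mod_cast ht0]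
  have hk0_ub : k0 < (b' : ℤ) := by
    have h1 : (t : ℤ) * k0 ≤ (t : ℤ) * (b' : ℤ) - 1 := by
      rw [htk0]
      rcases eq_or_ne t 1 with ht1 | ht1
      · have hn1 := hn_t1 ht1
        have : P = 1 := by omega
        rw [this]
        have : (t : ℤ) = 1 := by exact_mod_cast ht1
        rw [this]
        omega
      · have hP' := hPt1 ht1
        nlinarith [neg_abs_le n, hnb', hP',
          mul_le_mul_of_nonneg_left hP' (show (0:ℤ) ≤ (b':ℤ) by positivity),
          show (1:ℤ) ≤ (b':ℤ) by exact_mod_cast hb'0]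
    nlinarith [show (1:ℤ) ≤ (t:ℤ) by exact_mod_cast ht0]
  -- denominator of Fq
  have hFqden : Nat.Coprime Fq.den b' := by
    have hFq_div : Fq = ((P : ℤ) : ℚ) / ((t : ℤ) : ℚ) := by
      rw [eq_div_iff (by exact_mod_cast htq)]
      rw [mul_comm]
      exact_mod_cast htFq
    have h1 : ((Fq.den : ℤ)) ∣ (t : ℤ) := den_dvd_of_eq_div Fq P (t : ℤ) (by exact_mod_cast hFq_div)
    exact Nat.Coprime.coprime_dvd_left (by exact_mod_cast h1) hcop_tb'
  have hdw : dwork b' α = Fq := dwork_eq_of hb'0 hFqden hk0_lb hk0_ub hk0eq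
  -- d-integrality
  obtain ⟨du, hdu⟩ := hsd
  have hdα : (d : ℚ) * α = ((r * du : ℤ) : ℚ) := by
    have : ((d : ℕ) : ℚ) = (s : ℚ) * (du : ℚ) := by exact_mod_cast congrArg (Int.cast : ℤ → ℚ) hdu
    rw [this]
    push_cast
    rw [hαdef]
    field_simp
  set dF : ℤ := e * (r * du) + (d : ℤ) * Eq1 with hdFdef
  clear_value dF
  have hdFeq : (d : ℚ) * Fq = (dF : ℚ) := by
    rw [hFqdef, hdFdef]
    push_cast
    rw [show (d:ℚ) * ((e:ℚ) * α + (Eq1:ℚ)) = (e:ℚ) * ((d:ℚ) * α) + (d:ℚ) * (Eq1:ℚ) by ring, hdα]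
    push_cast
    ring
  have hcdF : (c : ℤ) ∣ dF := by
    rw [hdFdef]
    exact dvd_add (Dvd.dvd.mul_left (Dvd.dvd.mul_right hcr du) e) (Dvd.dvd.mul_right hcd Eq1)
  exact ⟨hdw, ⟨hFq_pos, hFq_le⟩, ⟨k0, hk0eq⟩, ⟨dF, hdFeq, hcdF⟩, hcd⟩

end Side

section MainArith

private lemma main_arith (b d : ℕ) (hb : 0 < b) (hd : 0 < d)
    (α₁ α₂ G₁ G₂ : ℚ) (a : ℤ) (ha : 0 < a)
    (hG₁p : 0 < G₁) (hG₁le : G₁ ≤ 1) (hG₂p : 0 < G₂) (hG₂le : G₂ ≤ 1)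
    (E₁ E₂ W₁ W₂ : ℤ)
    (hE₁ : (b : ℚ) * G₁ - α₁ = (E₁ : ℚ)) (hE₂ : (b : ℚ) * G₂ - α₂ = (E₂ : ℚ))
    (hW₁ : (d : ℚ) * G₁ = (W₁ : ℚ)) (hW₂ : (d : ℚ) * G₂ = (W₂ : ℚ))
    (hAb : (d : ℤ) * |⌊1 - α₁⌋ - ⌊1 - α₂⌋| < (b : ℤ)) :
    ((G₁ + ((⌊1 - α₁⌋ : ℤ) : ℚ) / (b : ℚ) ≤ G₂ + ((⌊1 - α₂⌋ : ℤ) : ℚ) / (b : ℚ)) ↔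
      (G₁ < G₂ ∨ (G₁ = G₂ ∧ ⌊1 - (a : ℚ) * α₁⌋ ≤ ⌊1 - (a : ℚ) * α₂⌋))) ∧
    (G₁ - ((⌊1 - (a : ℚ) * α₁⌋ : ℤ) : ℚ) = G₂ - ((⌊1 - (a : ℚ) * α₂⌋ : ℤ) : ℚ) → α₁ = α₂) := by
  have hdq : (0 : ℚ) < (d : ℚ) := by exact_mod_cast hd
  have hbq : (0 : ℚ) < (b : ℚ) := by exact_mod_cast hb
  have mono : ∀ (G G' : ℚ) (W W' A A' : ℤ), (d : ℚ) * G = (W : ℚ) → (d : ℚ) * G' = (W' : ℚ) →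
      (d : ℤ) * |A - A'| < (b : ℤ) → G < G' →
      G + (A : ℚ) / (b : ℚ) < G' + (A' : ℚ) / (b : ℚ) := by
    intro G G' W W' A A' hW hW' hAA' hGG'
    have h1 : W < W' := by
      have h0 : (W : ℚ) < (W' : ℚ) := by rw [← hW, ← hW']; nlinarith
      exact_mod_cast h0
    have h2 : (1 : ℚ) ≤ (d : ℚ) * (G' - G) := by
      have h0 : ((W : ℚ)) + 1 ≤ (W' : ℚ) := by exact_mod_cast h1
      nlinarith
    have h3 : ((A : ℚ) - (A' : ℚ)) * (d : ℚ) < (b : ℚ) := by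
      have h4 : ((d : ℕ) : ℚ) * |(A : ℚ) - (A' : ℚ)| < ((b : ℕ) : ℚ) := by
        exact_mod_cast hAA'
      nlinarith [le_abs_self ((A : ℚ) - (A' : ℚ)), hdq]
    have h5 : ((A : ℚ) - (A' : ℚ)) / (b : ℚ) < G' - G := by
      rw [div_lt_iff₀ hbq]
      nlinarith
    have h6 : (A : ℚ) / (b : ℚ) - (A' : ℚ) / (b : ℚ) = ((A : ℚ) - (A' : ℚ)) / (b : ℚ) := by
      ring
    linarith
  have tie : G₁ = G₂ → α₁ - α₂ = (E₂ : ℚ) - (E₁ : ℚ) := by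
    intro heq
    rw [heq] at hE₁
    linarith
  constructor
  · rcases lt_trichotomy G₁ G₂ with hlt | heq | hgt
    · have hm := mono G₁ G₂ W₁ W₂ ⌊1 - α₁⌋ ⌊1 - α₂⌋ hW₁ hW₂ hAb hlt
      constructor
      · intro _; exact Or.inl hlt
      · intro _; linarith
    · have hδ := tie heq
      have hA : ⌊1 - α₁⌋ = ⌊1 - α₂⌋ - (E₂ - E₁) := by
        have hstep : (1 : ℚ) - α₁ = (1 - α₂) - ((E₂ - E₁ : ℤ) : ℚ) := by push_cast; linarith
        rw [hstep, Int.floor_sub_intCast]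
      have hM : ⌊1 - (a : ℚ) * α₁⌋ = ⌊1 - (a : ℚ) * α₂⌋ - a * (E₂ - E₁) := by
        have hstep : (1 : ℚ) - (a : ℚ) * α₁ = (1 - (a : ℚ) * α₂) - ((a * (E₂ - E₁) : ℤ) : ℚ) := by
          push_cast
          linear_combination (-(a : ℚ)) * hδ
        rw [hstep, Int.floor_sub_intCast]
      constructor
      · intro hle
        right
        refine ⟨heq, ?_⟩
        have h6 : ((⌊1 - α₁⌋ : ℤ) : ℚ) / (b : ℚ) ≤ ((⌊1 - α₂⌋ : ℤ) : ℚ) / (b : ℚ) := by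
          linarith [hle, heq]
        have h7 : ⌊1 - α₁⌋ ≤ ⌊1 - α₂⌋ := by
          have h8 : ((⌊1 - α₁⌋ : ℤ) : ℚ) ≤ ((⌊1 - α₂⌋ : ℤ) : ℚ) :=
            (div_le_div_iff_of_pos_right hbq).mp h6
          exact_mod_cast h8
        have hδ0 : 0 ≤ E₂ - E₁ := by omega
        have h12 : 0 ≤ a * (E₂ - E₁) := mul_nonneg ha.le hδ0
        linarith [hM]
      · rintro (h | ⟨_, hM12⟩)
        · exact absurd (heq ▸ h) (lt_irrefl G₂)
        · have h8 : 0 ≤ a * (E₂ - E₁) := by linarith [hM, hM12]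
          have hδ0 : 0 ≤ E₂ - E₁ := by
            rcases le_or_gt 0 (E₂ - E₁) with h | h
            · exact h
            · nlinarith
          have h9 : ⌊1 - α₁⌋ ≤ ⌊1 - α₂⌋ := by omega
          have h10 : ((⌊1 - α₁⌋ : ℤ) : ℚ) ≤ ((⌊1 - α₂⌋ : ℤ) : ℚ) := by exact_mod_cast h9
          have h11 : ((⌊1 - α₁⌋ : ℤ) : ℚ) / (b : ℚ) ≤ ((⌊1 - α₂⌋ : ℤ) : ℚ) / (b : ℚ) := by
            gcongr
          linarith [heq]
    · have hm := mono G₂ G₁ W₂ W₁ ⌊1 - α₂⌋ ⌊1 - α₁⌋ hW₂ hW₁ (by rwa [abs_sub_comm] at hAb) hgt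
      constructor
      · intro hle; linarith
      · rintro (h | ⟨h1, _⟩)
        · exact absurd h (not_lt.mpr hgt.le)
        · exact absurd h1 (ne_of_gt hgt)
  · intro hJeq
    have hMeq : ⌊1 - (a : ℚ) * α₁⌋ = ⌊1 - (a : ℚ) * α₂⌋ ∧ G₁ = G₂ := by
      have h1 : G₁ - G₂ = ((⌊1 - (a : ℚ) * α₁⌋ - ⌊1 - (a : ℚ) * α₂⌋ : ℤ) : ℚ) := by
        push_cast
        linarith
      have h2 : |((⌊1 - (a : ℚ) * α₁⌋ - ⌊1 - (a : ℚ) * α₂⌋ : ℤ) : ℚ)| < 1 := by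
        rw [← h1, abs_lt]
        constructor <;> linarith
      have h3 : |(⌊1 - (a : ℚ) * α₁⌋ - ⌊1 - (a : ℚ) * α₂⌋ : ℤ)| < 1 := by exact_mod_cast h2
      have h3' := abs_lt.mp h3
      have h4 : ⌊1 - (a : ℚ) * α₁⌋ = ⌊1 - (a : ℚ) * α₂⌋ := by omega
      refine ⟨h4, ?_⟩
      rw [h4] at h1
      simp only [sub_self, Int.cast_zero] at h1
      linarith
    obtain ⟨hM4, hGeq⟩ := hMeq
    have hδ := tie hGeq
    have hM : ⌊1 - (a : ℚ) * α₁⌋ = ⌊1 - (a : ℚ) * α₂⌋ - a * (E₂ - E₁) := by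
      have hstep : (1 : ℚ) - (a : ℚ) * α₁ = (1 - (a : ℚ) * α₂) - ((a * (E₂ - E₁) : ℤ) : ℚ) := by
        push_cast
        linear_combination (-(a : ℚ)) * hδ
      rw [hstep, Int.floor_sub_intCast]
    have h5 : a * (E₂ - E₁) = 0 := by linarith [hM, hM4]
    have h6 : E₂ - E₁ = 0 := by
      rcases mul_eq_zero.mp h5 with h | h
      · omega
      · exact h
    have h7 : (E₂ : ℚ) - (E₁ : ℚ) = 0 := by
      have : (E₂ : ℚ) = (E₁ : ℚ) := by exact_mod_cast congrArg (Int.cast : ℤ → ℚ) (by omega : E₂ = E₁)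
      linarith
    linarith [hδ, h7]

end MainArith

set_option maxHeartbeats 3200000 in
/-- Lemma 5.3: comparison of the orderings of the jumps. -/
theorem jumps_ordering (r₁ s₁ r₂ s₂ : ℤ) (hs₁ : s₁ ≠ 0) (hs₂ : s₂ ≠ 0)
    (hα₁ : ¬ IsNonPosInt ((r₁ : ℚ) / (s₁ : ℚ))) (hα₂ : ¬ IsNonPosInt ((r₂ : ℚ) / (s₂ : ℚ)))
    (b : ℕ)
    (hbig : max (max |r₁| |r₂|)
        ((Int.lcm s₁ s₂ : ℤ) * |⌊1 - (r₁ : ℚ) / (s₁ : ℚ)⌋ - ⌊1 - (r₂ : ℚ) / (s₂ : ℚ)⌋|)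
      < (b : ℤ))
    (e₁ e₂ : ℤ)
    (he₁ : 1 ≤ e₁ ∧ e₁ ≤ (Int.lcm s₁ s₂ : ℤ) ∧ s₁ ∣ ((b : ℤ) * e₁ - (cOf (r₁, s₁) b : ℤ)))
    (he₂ : 1 ≤ e₂ ∧ e₂ ≤ (Int.lcm s₁ s₂ : ℤ) ∧ s₂ ∣ ((b : ℤ) * e₂ - (cOf (r₂, s₂) b : ℤ)))
    (k₁ k₂ : ℕ) (hk₁ : k₁ < cOf (r₁, s₁) b) (hk₂ : k₂ < cOf (r₂, s₂) b)
    (a : ℤ) (ha : 0 < a) :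
    ((dwork (b / cOf (r₁, s₁) b) ((r₁ : ℚ) / (s₁ : ℚ)) + (k₁ : ℚ)) / (cOf (r₁, s₁) b : ℚ)
          + ((⌊1 - (r₁ : ℚ) / (s₁ : ℚ)⌋ : ℤ) : ℚ) / (b : ℚ) ≤
        (dwork (b / cOf (r₂, s₂) b) ((r₂ : ℚ) / (s₂ : ℚ)) + (k₂ : ℚ)) / (cOf (r₂, s₂) b : ℚ)
          + ((⌊1 - (r₂ : ℚ) / (s₂ : ℚ)⌋ : ℤ) : ℚ) / (b : ℚ) ↔
      cle (jumpPt (r₁, s₁) b a e₁ k₁) (jumpPt (r₂, s₂) b a e₂ k₂)) ∧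
    (jumpPt (r₁, s₁) b a e₁ k₁ = jumpPt (r₂, s₂) b a e₂ k₂ →
      (r₁ : ℚ) / (s₁ : ℚ) = (r₂ : ℚ) / (s₂ : ℚ)) := by
  rw [max_lt_iff, max_lt_iff] at hbig
  obtain ⟨⟨hr1b, hr2b⟩, hAb⟩ := hbig
  have hb : 0 < b := by
    have h0 : (0 : ℤ) < (b : ℤ) := lt_of_le_of_lt (abs_nonneg r₁) hr1b
    exact_mod_cast h0
  have hs1d : s₁ ∣ ((Int.lcm s₁ s₂ : ℕ) : ℤ) := Int.dvd_lcm_left _ _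
  have hs2d : s₂ ∣ ((Int.lcm s₁ s₂ : ℕ) : ℤ) := Int.dvd_lcm_right _ _
  have hd : 0 < Int.lcm s₁ s₂ := by
    rw [Int.lcm_def]
    exact Nat.pos_of_ne_zero
      (Nat.lcm_ne_zero (Int.natAbs_ne_zero.mpr hs₁) (Int.natAbs_ne_zero.mpr hs₂))
  obtain ⟨hdw₁, ⟨hF1p, hF1le⟩, ⟨k01, hk01⟩, ⟨dF₁, hdF₁, hcdF₁⟩, hcd₁⟩ :=
    side_main r₁ s₁ b (Int.lcm s₁ s₂) e₁ hs₁ hα₁ hr1b hs1d he₁.2.2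
  obtain ⟨hdw₂, ⟨hF2p, hF2le⟩, ⟨k02, hk02⟩, ⟨dF₂, hdF₂, hcdF₂⟩, hcd₂⟩ :=
    side_main r₂ s₂ b (Int.lcm s₁ s₂) e₂ hs₂ hα₂ hr2b hs2d he₂.2.2
  rw [hdw₁, hdw₂]
  set c₁ : ℕ := cOf (r₁, s₁) b with hc₁def
  set c₂ : ℕ := cOf (r₂, s₂) b with hc₂def
  set α₁ : ℚ := (r₁ : ℚ) / (s₁ : ℚ) with hα₁def
  set α₂ : ℚ := (r₂ : ℚ) / (s₂ : ℚ) with hα₂def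
  set F₁ : ℚ := (e₁ : ℚ) * α₁ + ((⌊1 - (e₁ : ℚ) * α₁⌋ : ℤ) : ℚ) with hF₁def
  set F₂ : ℚ := (e₂ : ℚ) * α₂ + ((⌊1 - (e₂ : ℚ) * α₂⌋ : ℤ) : ℚ) with hF₂def
  set G₁ : ℚ := (F₁ + (k₁ : ℚ)) / (c₁ : ℚ) with hG₁def
  set G₂ : ℚ := (F₂ + (k₂ : ℚ)) / (c₂ : ℚ) with hG₂def
  -- positivity facts
  have hc₁0 : 0 < c₁ := by
    rw [hc₁def]
    apply Nat.pos_of_ne_zero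
    intro h0
    have h0' : Nat.gcd (Int.gcd r₁ s₁) b = 0 := h0
    have := Nat.eq_zero_of_gcd_eq_zero_right h0'
    omega
  have hc₂0 : 0 < c₂ := by
    rw [hc₂def]
    apply Nat.pos_of_ne_zero
    intro h0
    have h0' : Nat.gcd (Int.gcd r₂ s₂) b = 0 := h0
    have := Nat.eq_zero_of_gcd_eq_zero_right h0'
    omega
  have hc₁q : (0 : ℚ) < (c₁ : ℚ) := by exact_mod_cast hc₁0
  have hc₂q : (0 : ℚ) < (c₂ : ℚ) := by exact_mod_cast hc₂0
  have hG₁p : 0 < G₁ := by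
    rw [hG₁def]
    apply div_pos _ hc₁q
    have : (0 : ℚ) ≤ (k₁ : ℚ) := by positivity
    linarith
  have hG₂p : 0 < G₂ := by
    rw [hG₂def]
    apply div_pos _ hc₂q
    have : (0 : ℚ) ≤ (k₂ : ℚ) := by positivity
    linarith
  have hG₁le : G₁ ≤ 1 := by
    rw [hG₁def, div_le_one hc₁q]
    have hki : ((k₁ : ℚ)) + 1 ≤ (c₁ : ℚ) := by exact_mod_cast Nat.succ_le_of_lt hk₁
    linarith
  have hG₂le : G₂ ≤ 1 := by
    rw [hG₂def, div_le_one hc₂q]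
    have hki : ((k₂ : ℚ)) + 1 ≤ (c₂ : ℚ) := by exact_mod_cast Nat.succ_le_of_lt hk₂
    linarith
  -- E facts
  have hcb₁ : c₁ ∣ b := by rw [hc₁def]; exact Nat.gcd_dvd_right _ _
  have hcb₂ : c₂ ∣ b := by rw [hc₂def]; exact Nat.gcd_dvd_right _ _
  have hbc₁ : ((b : ℕ) : ℚ) = (c₁ : ℚ) * ((b / c₁ : ℕ) : ℚ) := by
    exact_mod_cast (Nat.mul_div_cancel' hcb₁).symm
  have hbc₂ : ((b : ℕ) : ℚ) = (c₂ : ℚ) * ((b / c₂ : ℕ) : ℚ) := by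
    exact_mod_cast (Nat.mul_div_cancel' hcb₂).symm
  have hG₁mul : (c₁ : ℚ) * G₁ = F₁ + (k₁ : ℚ) := by
    rw [hG₁def]
    field_simp
  have hG₂mul : (c₂ : ℚ) * G₂ = F₂ + (k₂ : ℚ) := by
    rw [hG₂def]
    field_simp
  have hE₁ : (b : ℚ) * G₁ - α₁ = ((k01 + ((b / c₁ : ℕ) : ℤ) * (k₁ : ℤ) : ℤ) : ℚ) := by
    have h1 : (b : ℚ) * G₁ = ((b / c₁ : ℕ) : ℚ) * ((c₁ : ℚ) * G₁) := by
      rw [hbc₁]; ring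
    rw [h1, hG₁mul, Int.cast_add, Int.cast_mul, Int.cast_natCast, Int.cast_natCast]
    linear_combination hk01
  have hE₂ : (b : ℚ) * G₂ - α₂ = ((k02 + ((b / c₂ : ℕ) : ℤ) * (k₂ : ℤ) : ℤ) : ℚ) := by
    have h1 : (b : ℚ) * G₂ = ((b / c₂ : ℕ) : ℚ) * ((c₂ : ℚ) * G₂) := by
      rw [hbc₂]; ring
    rw [h1, hG₂mul, Int.cast_add, Int.cast_mul, Int.cast_natCast, Int.cast_natCast]
    linear_combination hk02
  -- W facts
  obtain ⟨W₁, hW₁i⟩ := dvd_add hcdF₁ (Dvd.dvd.mul_right hcd₁ (k₁ : ℤ))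
  obtain ⟨W₂, hW₂i⟩ := dvd_add hcdF₂ (Dvd.dvd.mul_right hcd₂ (k₂ : ℤ))
  have hW₁ : ((Int.lcm s₁ s₂ : ℕ) : ℚ) * G₁ = (W₁ : ℚ) := by
    have h0 : ((dF₁ : ℚ)) + ((Int.lcm s₁ s₂ : ℕ) : ℚ) * (k₁ : ℚ) = (c₁ : ℚ) * (W₁ : ℚ) := by
      exact_mod_cast congrArg (Int.cast : ℤ → ℚ) hW₁i
    have h1 : (c₁ : ℚ) * (((Int.lcm s₁ s₂ : ℕ) : ℚ) * G₁) = (c₁ : ℚ) * (W₁ : ℚ) := by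
      rw [show (c₁ : ℚ) * (((Int.lcm s₁ s₂ : ℕ) : ℚ) * G₁)
          = ((Int.lcm s₁ s₂ : ℕ) : ℚ) * ((c₁ : ℚ) * G₁) by ring, hG₁mul, mul_add, hdF₁]
      exact h0
    exact mul_left_cancel₀ (ne_of_gt hc₁q) h1
  have hW₂ : ((Int.lcm s₁ s₂ : ℕ) : ℚ) * G₂ = (W₂ : ℚ) := by
    have h0 : ((dF₂ : ℚ)) + ((Int.lcm s₁ s₂ : ℕ) : ℚ) * (k₂ : ℚ) = (c₂ : ℚ) * (W₂ : ℚ) := by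
      exact_mod_cast congrArg (Int.cast : ℤ → ℚ) hW₂i
    have h1 : (c₂ : ℚ) * (((Int.lcm s₁ s₂ : ℕ) : ℚ) * G₂) = (c₂ : ℚ) * (W₂ : ℚ) := by
      rw [show (c₂ : ℚ) * (((Int.lcm s₁ s₂ : ℕ) : ℚ) * G₂)
          = ((Int.lcm s₁ s₂ : ℕ) : ℚ) * ((c₂ : ℚ) * G₂) by ring, hG₂mul, mul_add, hdF₂]
      exact h0
    exact mul_left_cancel₀ (ne_of_gt hc₂q) h1
  -- jumpPt facts
  have hJ₁ : jumpPt (r₁, s₁) b a e₁ k₁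
      = (((G₁ - ((⌊1 - (a : ℚ) * α₁⌋ : ℤ) : ℚ)) : ℚ) : ℝ) := by
    simp only [jumpPt, ratOf]
    rw [cangle_ratCast]
    rw [hG₁def, hF₁def, hα₁def, hc₁def]
    push_cast
    ring
  have hJ₂ : jumpPt (r₂, s₂) b a e₂ k₂
      = (((G₂ - ((⌊1 - (a : ℚ) * α₂⌋ : ℤ) : ℚ)) : ℚ) : ℝ) := by
    simp only [jumpPt, ratOf]
    rw [cangle_ratCast]
    rw [hG₂def, hF₂def, hα₂def, hc₂def]
    push_cast
    ring
  have hcan₁ : cangle (jumpPt (r₁, s₁) b a e₁ k₁) = ((G₁ : ℚ) : ℝ) := by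
    rw [hJ₁, show (((G₁ - ((⌊1 - (a : ℚ) * α₁⌋ : ℤ) : ℚ)) : ℚ) : ℝ)
        = ((G₁ : ℚ) : ℝ) - ((⌊1 - (a : ℚ) * α₁⌋ : ℤ) : ℝ) by push_cast; ring,
      cangle_sub_intCast, cangle_ratCast_Ioc G₁ hG₁p hG₁le]
  have hcan₂ : cangle (jumpPt (r₂, s₂) b a e₂ k₂) = ((G₂ : ℚ) : ℝ) := by
    rw [hJ₂, show (((G₂ - ((⌊1 - (a : ℚ) * α₂⌋ : ℤ) : ℚ)) : ℚ) : ℝ)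
        = ((G₂ : ℚ) : ℝ) - ((⌊1 - (a : ℚ) * α₂⌋ : ℤ) : ℝ) by push_cast; ring,
      cangle_sub_intCast, cangle_ratCast_Ioc G₂ hG₂p hG₂le]
  have main := main_arith b (Int.lcm s₁ s₂) hb hd α₁ α₂ G₁ G₂ a ha hG₁p hG₁le hG₂p hG₂le
    _ _ W₁ W₂ hE₁ hE₂ hW₁ hW₂ hAb
  have hcle : cle (jumpPt (r₁, s₁) b a e₁ k₁) (jumpPt (r₂, s₂) b a e₂ k₂) ↔
      (G₁ < G₂ ∨ (G₁ = G₂ ∧ ⌊1 - (a : ℚ) * α₁⌋ ≤ ⌊1 - (a : ℚ) * α₂⌋)) := by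
    unfold cle
    rw [hcan₁, hcan₂, hJ₁, hJ₂]
    constructor
    · rintro (h | ⟨h1, h2⟩)
      · exact Or.inl (by exact_mod_cast h)
      · have hG : G₁ = G₂ := by exact_mod_cast h1
        have h2' : G₂ - ((⌊1 - (a : ℚ) * α₂⌋ : ℤ) : ℚ) ≤ G₁ - ((⌊1 - (a : ℚ) * α₁⌋ : ℤ) : ℚ) := by
          exact_mod_cast h2
        refine Or.inr ⟨hG, ?_⟩
        have h3 : ((⌊1 - (a : ℚ) * α₁⌋ : ℤ) : ℚ) ≤ ((⌊1 - (a : ℚ) * α₂⌋ : ℤ) : ℚ) := by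
          rw [hG] at h2'; linarith
        exact_mod_cast h3
    · rintro (h | ⟨h1, h2⟩)
      · exact Or.inl (by exact_mod_cast h)
      · refine Or.inr ⟨by exact_mod_cast h1, ?_⟩
        have h3 : ((⌊1 - (a : ℚ) * α₁⌋ : ℤ) : ℚ) ≤ ((⌊1 - (a : ℚ) * α₂⌋ : ℤ) : ℚ) := by
          exact_mod_cast h2
        have hq : G₂ - ((⌊1 - (a : ℚ) * α₂⌋ : ℤ) : ℚ) ≤ G₁ - ((⌊1 - (a : ℚ) * α₁⌋ : ℤ) : ℚ) := by
          rw [h1]; linarith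
        exact_mod_cast hq
  constructor
  · rw [hcle]
    exact main.1
  · intro hJeq
    apply main.2
    rw [hJ₁, hJ₂] at hJeq
    exact_mod_cast hJeq
end

section
/- Let 𝐫 = ((r_1,s_1),…,(r_v,s_v)) and 𝐭 = ((t_1,u_1),…,(t_w,u_w)) be vectors of pairs of integers with all s_i, u_j ≠ 0 and all the ratios α_i := r_i/s_i and β_j := t_j/u_j not in ℤ_{≤0}. Let b ∈ {1, …, d_{𝐫,𝐭}} be coprime to d_{𝐫,𝐭} and let a ∈ {1, …, d_{𝐫,𝐭}} be the unique integer with a·b ≡ 1 (mod d_{𝐫,𝐭}). Then for every real number x, Ξ_{𝐫,𝐭}(b, x) = ξ_{𝛂,𝛃}(a, x), where ξ_{𝛂,𝛃}(a, x) := #{i ∈ {1,…,v} : a·α_i ⪯ x} − #{j ∈ {1,…,w} : a·β_j ⪯ x} is the Christol step function. -/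
open Polynomial
open scoped Classical

lemma cangle_add_int (x : ℝ) (m : ℤ) : cangle (x + m) = cangle x := by
  unfold cangle
  have h : (∃ k : ℤ, x + (m : ℝ) = (k : ℝ)) ↔ ∃ k : ℤ, x = (k : ℝ) := by
    constructor
    · rintro ⟨k, hk⟩; exact ⟨k - m, by push_cast; linarith⟩
    · rintro ⟨k, hk⟩; exact ⟨k + m, by push_cast; linarith⟩
  rw [if_congr h rfl rfl, Int.fract_add_intCast]

lemma cangle_sub_floor (x : ℝ) : cangle x - (⌊1 - x⌋ : ℝ) = x := by
  unfold cangle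
  split_ifs with h
  · obtain ⟨m, rfl⟩ := h
    rw [show (1 : ℝ) - m = ((1 - m : ℤ) : ℝ) by push_cast; ring, Int.floor_intCast]
    push_cast; ring
  · have hfr : 0 < Int.fract x := Int.fract_pos.mpr (fun hx => h ⟨⌊x⌋, hx⟩)
    have hfr2 : Int.fract x < 1 := Int.fract_lt_one x
    have hx : x = ⌊x⌋ + Int.fract x := by rw [Int.floor_add_fract]
    have hf : ⌊1 - x⌋ = -⌊x⌋ := by
      rw [Int.floor_eq_iff]
      constructor <;> [push_cast; push_cast] <;> linarith
    rw [hf]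
    have : Int.fract x = x - ⌊x⌋ := (Int.self_sub_floor x).symm
    push_cast [this]; ring

lemma xi_key (d : ℕ) (p : ℤ × ℤ) (b a : ℕ) (ei : ℤ)
    (hp2 : p.2 ≠ 0)
    (hdvd : p.2.natAbs ∣ d) (hcopbd : Nat.Coprime b d)
    (hab : (a * b) % d = 1 % d) (hgood : goodChoice p b ei) (x : ℝ) :
    (XiCount p b (a : ℤ) ei x : ℤ) =
      if cle ((a : ℝ) * ((ratOf p : ℚ) : ℝ)) x then 1 else 0 := by
  have hsb : Nat.Coprime p.2.natAbs b :=
    Nat.Coprime.coprime_dvd_left hdvd hcopbd.symm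
  -- cOf p b = 1
  have hgd : Int.gcd p.1 p.2 ∣ p.2.natAbs := by
    rw [Int.gcd]; exact Nat.gcd_dvd_right _ _
  have hc : cOf p b = 1 := by
    have h1 : cOf p b ∣ Nat.gcd p.2.natAbs b :=
      Nat.dvd_gcd (dvd_trans (Nat.gcd_dvd_left _ _) hgd) (Nat.gcd_dvd_right _ _)
    rw [hsb] at h1
    exact Nat.dvd_one.mp h1
  have hinV : inV p b := by unfold inV; rw [hc]; exact hsb
  obtain ⟨hei, hdvd2⟩ := hgood hinV
  rw [hc] at hdvd2
  -- p.2 ∣ ei - a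
  have hdd : p.2 ∣ (d : ℤ) := Int.natAbs_dvd.mp (Int.natCast_dvd_natCast.mpr hdvd)
  have hab' : (d : ℤ) ∣ (a : ℤ) * b - 1 := by
    have h0 : (d : ℤ) ∣ (1 : ℤ) - (a * b : ℕ) := (Nat.modEq_iff_dvd).mp hab
    obtain ⟨k, hk⟩ := h0
    exact ⟨-k, by push_cast at hk ⊢; linarith⟩
  have hsab : p.2 ∣ (a : ℤ) * b - 1 := dvd_trans hdd hab'
  have hmul : p.2 ∣ (b : ℤ) * (ei - a) := by
    have : (b : ℤ) * (ei - a) = ((b : ℤ) * ei - 1) - ((a : ℤ) * b - 1) := by ring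
    rw [this]
    exact dvd_sub hdvd2 hsab
  have hcop2 : Int.gcd p.2 (b : ℤ) = 1 := by
    rw [Int.gcd]; simpa using hsb
  have hdei : p.2 ∣ ei - a :=
    Int.dvd_of_dvd_mul_left_of_gcd_one (by rwa [mul_comm] at hmul) hcop2
  obtain ⟨t, ht⟩ := hdei
  -- (ei : ℚ) * ratOf p = a * ratOf p + (t * p.1)
  have hp2Q : (p.2 : ℚ) ≠ 0 := Int.cast_ne_zero.mpr hp2
  have hshift : (ei : ℚ) * ratOf p = (a : ℚ) * ratOf p + ((t * p.1 : ℤ) : ℚ) := by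
    unfold ratOf
    field_simp
    have : (ei : ℚ) = (a : ℚ) + (p.2 : ℚ) * t := by
      have := congrArg (fun z : ℤ => (z : ℚ)) ht
      push_cast at this
      linarith
    rw [this]; push_cast; ring
  set q : ℚ := (a : ℚ) * ratOf p with hq
  have hjump : jumpPt p b (a : ℤ) ei 0 = (a : ℝ) * ((ratOf p : ℚ) : ℝ) := by
    unfold jumpPt
    rw [hc]
    have h1 : (((((ei : ℤ) : ℚ)) * ratOf p : ℚ) : ℝ) = ((q : ℝ) + ((t * p.1 : ℤ) : ℝ)) := by
      rw [hshift]; push_cast; ring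
    rw [h1, cangle_add_int]
    have h2 : ((⌊1 - (((a : ℕ) : ℤ) : ℚ) * ratOf p⌋ : ℤ) : ℝ) = ((⌊1 - (q : ℝ)⌋ : ℤ) : ℝ) := by
      have hc2 : (1 : ℝ) - (q : ℝ) = ((1 - q : ℚ) : ℝ) := by push_cast; ring
      rw [hc2, Rat.floor_cast]
      norm_num [hq]
    have h3 := cangle_sub_floor ((q : ℝ))
    simp only [Nat.cast_zero, add_zero, Nat.cast_one, div_one]
    rw [h2]
    push_cast [hq] at h3 ⊢
    linarith
  unfold XiCount
  rw [if_pos hinV, hc]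
  simp only [Finset.range_one, Finset.filter_singleton]
  rw [hjump]
  split_ifs <;> simp


/-- for `b` coprime to `d_{𝐫,𝐭}`, the generalized Christol function
`Ξ_{𝐫,𝐭}(b, ·)` coincides with the classical Christol step function `ξ_{𝛂,𝛃}(a, ·)`. -/
theorem xi_eq_christol {v w : ℕ} (rr : Fin v → ℤ × ℤ) (tt : Fin w → ℤ × ℤ)
    (hs : ∀ i, (rr i).2 ≠ 0) (hu : ∀ j, (tt j).2 ≠ 0)
    (hr : ∀ i, ¬ IsNonPosInt (ratOf (rr i))) (ht : ∀ j, ¬ IsNonPosInt (ratOf (tt j)))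
    (b : ℕ) (hb1 : 1 ≤ b) (hbd : b ≤ dRT rr tt) (hcop : Nat.Coprime b (dRT rr tt))
    (a : ℕ) (ha1 : 1 ≤ a) (had : a ≤ dRT rr tt)
    (hab : (a * b) % dRT rr tt = 1 % dRT rr tt)
    (e : Fin v → ℤ) (f : Fin w → ℤ)
    (he : ∀ i, goodChoice (rr i) b (e i)) (hf : ∀ j, goodChoice (tt j) b (f j))
    (x : ℝ) :
    Xi rr tt b e f x =
      ((Finset.univ.filter fun i : Fin v =>
          cle ((a : ℝ) * ((ratOf (rr i) : ℚ) : ℝ)) x).card : ℤ) -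
        ((Finset.univ.filter fun j : Fin w =>
          cle ((a : ℝ) * ((ratOf (tt j) : ℚ) : ℝ)) x).card : ℤ) := by
  have hd1 : 1 ≤ dRT rr tt := le_trans hb1 hbd
  have hbt : btilde (dRT rr tt) b = b := by
    have h1 : b ≤ btilde (dRT rr tt) b :=
      Nat.le_findGreatest le_rfl ⟨dvd_rfl, hcop⟩
    have h2 : btilde (dRT rr tt) b ≤ b := Nat.findGreatest_le b
    omega
  have haOf : aOf (dRT rr tt) b = a := by
    unfold aOf
    have hex : ∃ a', 1 ≤ a' ∧ a' ≤ dRT rr tt ∧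
        (a' * btilde (dRT rr tt) b) % dRT rr tt = 1 % dRT rr tt :=
      ⟨a, ha1, had, by rw [hbt]; exact hab⟩
    rw [dif_pos hex]
    obtain ⟨h1, h2, h3⟩ := hex.choose_spec
    generalize hgen : hex.choose = c at h1 h2 h3 ⊢
    rw [hbt] at h3
    have hmod : c % dRT rr tt = a % dRT rr tt := by
      have htr : Nat.ModEq (dRT rr tt) (c * b) (a * b) := h3.trans hab.symm
      exact Nat.ModEq.cancel_right_of_coprime hcop.symm htr
    have hdvd0 : (dRT rr tt : ℤ) ∣ (a : ℤ) - c := Nat.ModEq.dvd hmod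
    have h0 : ((a : ℤ) - c) = 0 := by
      apply Int.eq_zero_of_abs_lt_dvd hdvd0
      rw [abs_lt]
      constructor <;> push_cast <;> omega
    omega
  have hR : ∀ i, (XiCount (rr i) b ((a : ℕ) : ℤ) (e i) x : ℤ) =
      if cle ((a : ℝ) * ((ratOf (rr i) : ℚ) : ℝ)) x then 1 else 0 := fun i =>
    xi_key (dRT rr tt) (rr i) b a (e i) (hs i)
      (by unfold dRT; exact dvd_trans (Finset.dvd_lcm (f := fun i => ((rr i).2).natAbs) (Finset.mem_univ i)) (Nat.dvd_lcm_left _ _))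
      hcop hab (he i) x
  have hT : ∀ j, (XiCount (tt j) b ((a : ℕ) : ℤ) (f j) x : ℤ) =
      if cle ((a : ℝ) * ((ratOf (tt j) : ℚ) : ℝ)) x then 1 else 0 := fun j =>
    xi_key (dRT rr tt) (tt j) b a (f j) (hu j)
      (by unfold dRT; exact dvd_trans (Finset.dvd_lcm (f := fun j => ((tt j).2).natAbs) (Finset.mem_univ j)) (Nat.dvd_lcm_right _ _))
      hcop hab (hf j) x
  unfold Xi
  rw [haOf]
  rw [Finset.sum_congr rfl (fun i _ => hR i), Finset.sum_congr rfl (fun j _ => hT j)]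
  simp [Finset.sum_boole]
end
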